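/- Let w̃ ∈ W̃ and for v ∈ V, t ∈ ℝ set C_{w̃}(v,t) = exp(2t(1 − ᵗw̃)(1 − w̃))v, where ᵗw̃ is the adjoint of w̃ with respect to the inner product; this is the flow of the gradient of f_{w̃}(v) = ‖w̃(v) − v‖². Let v ∈ (V^W)^⊥ and write v = Σ_{θ∈Γ_{w̃}} v_θ with v_θ ∈ V^θ_{w̃} (using the orthogonal decomposition V = ⊕_{θ∈Γ_{w̃}} V^θ_{w̃}). If v_{θ_0} ≠ 0, where θ_0 is the minimal element of Γ_{w̃} with V^{θ_0}_{w̃} not contained in V^W, then lim_{t→−∞} C_{w̃}(v,t)/‖C_{w̃}(v,t)‖ = v_{θ_0}/‖v_{θ_0}‖. -/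

import Mathlib

open scoped RealInnerProductSpace


open SemidirectProduct Set

section

variable {B W : Type*} [Group W]

/-- The extended group `W̃ = ⟨δ⟩ ⋉ W`. -/
abbrev Wtilde (δ : MulAut W) := W ⋊[(Subgroup.zpowers δ).subtype] ↥(Subgroup.zpowers δ)

variable {M : CoxeterMatrix B} {δ : MulAut W} (cs : CoxeterSystem M W)

/-- The length function on `W̃`, extended from `W` by `ℓ(δ^i w) = ℓ(w)`. -/
noncomputable def tlen (x : Wtilde δ) : ℕ :=
  cs.length (((x.right : MulAut W))⁻¹ x.left)

/-- One step of conjugation by a simple reflection: `w̃ →_s w̃'`. -/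
def cstep (x y : Wtilde δ) : Prop :=
  ∃ i : B, y = inl (cs.simple i) * x * inl (cs.simple i) ∧ tlen cs y ≤ tlen cs x

variable {V : Type*} [NormedAddCommGroup V] [InnerProductSpace ℝ V] [FiniteDimensional ℝ V]
variable (ρ : Wtilde δ →* (V ≃ₗᵢ[ℝ] V))

/-- The set `𝔥` of hyperplanes of `V` whose orthogonal reflection is realized by an
element of `W`. -/
noncomputable def mirrors : Set (Submodule ℝ V) :=
  {H | Module.finrank ℝ H + 1 = Module.finrank ℝ V ∧
    ∃ w : W, ρ (inl w) = Submodule.reflection H}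

/-- The complement of the union of all the reflecting hyperplanes. -/
def chamberDom : Set V := {v | ∀ H ∈ mirrors ρ, v ∉ H}

/-- A Weyl chamber: a connected component of the complement of the mirrors. -/
def IsChamber (A : Set V) : Prop :=
  ∃ v ∈ chamberDom ρ, A = connectedComponentIn (chamberDom ρ) v

/-- The hyperplane `H` separates `a` and `b`: the segment from `a` to `b` meets `H`. -/
def SepPts (H : Submodule ℝ V) (a b : V) : Prop := ∃ x ∈ segment ℝ a b, x ∈ H

/-- The set `𝔥(A, A')` of reflecting hyperplanes separating `A` and `A'`. -/
noncomputable def sepSet (A A' : Set V) : Set (Submodule ℝ V) :=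
  {H | H ∈ mirrors ρ ∧ ∀ a ∈ A, ∀ b ∈ A', SepPts H a b}

/-- `v` is a regular point of the convex set `K`: every reflecting hyperplane through `v`
contains `K`. -/
def IsRegPt (K : Set V) (v : V) : Prop :=
  v ∈ K ∧ ∀ H ∈ mirrors ρ, v ∈ H → K ⊆ (H : Set V)

/-- The submodule `V^W` of `W`-fixed points. -/
def fixedW : Submodule ℝ V where
  carrier := {v | ∀ w : W, ρ (inl w) v = v}
  add_mem' := by
    intro a b ha hb w
    simp only [map_add, ha w, hb w]
  zero_mem' := by
    intro w
    simp
  smul_mem' := by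
    intro c a ha w
    simp only [map_smul, ha w]

/-- The "eigenspace" `V^θ_{w̃} = {v | w̃ v + w̃⁻¹ v = 2 cos θ · v}`. -/
def eigSp (x : Wtilde δ) (θ : ℝ) : Submodule ℝ V where
  carrier := {v | ρ x v + ρ x⁻¹ v = (2 * Real.cos θ) • v}
  add_mem' := by
    intro a b ha hb
    simp only [Set.mem_setOf_eq, map_add] at *
    rw [smul_add, ← ha, ← hb]
    abel
  zero_mem' := by simp
  smul_mem' := by
    intro c a ha
    simp only [Set.mem_setOf_eq, map_smul] at *
    rw [← smul_add, ha, smul_comm]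

/-- `V_{w̃} = V^{θ₀}_{w̃} ∩ (V^W)^⊥`. -/
noncomputable def Vmin (x : Wtilde δ) (θ₀ : ℝ) : Submodule ℝ V :=
  eigSp ρ x θ₀ ⊓ (fixedW ρ)ᗮ

/-- The complement of the union of the mirrors containing `K`
(whose connected components house the chambers adapted to `K`). -/
def chamberDomK (K : Set V) : Set V :=
  {v | ∀ H ∈ mirrors ρ, K ⊆ (H : Set V) → v ∉ H}

/-- The face of (the chamber) `A` in the hyperplane `H`: the interior, in `H`, of `H ∩ Ā`. -/
def faceIn (H : Submodule ℝ V) (A : Set V) : Set V :=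
  Subtype.val '' (interior {h : H | (h : V) ∈ closure A})

/-- The subgroup `W_K` of `W` generated by the reflections in the mirrors containing `K`. -/
noncomputable def WKsub (K : Set V) : Subgroup W :=
  Subgroup.closure {w : W | ∃ H ∈ mirrors ρ, K ⊆ (H : Set V) ∧ ρ (inl w) = Submodule.reflection H}

end


private lemma stmt17_exp_apply_eig {V : Type*} [NormedAddCommGroup V] [InnerProductSpace ℝ V]
    [FiniteDimensional ℝ V] (T : V →L[ℝ] V) (lam : ℝ) (w : V) (h : T w = lam • w) :
    NormedSpace.exp T w = Real.exp lam • w := by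
  have hpow : ∀ n : ℕ, (T ^ n) w = lam ^ n • w := by
    intro n; induction n with
    | zero => simp
    | succ n ih =>
      rw [pow_succ, ContinuousLinearMap.mul_apply, h, map_smul, ih, smul_smul, ← pow_succ']
  have hsum := NormedSpace.expSeries_summable' (𝕂 := ℝ) T
  rw [NormedSpace.exp_eq_tsum ℝ]
  have hmap := (ContinuousLinearMap.apply ℝ V w).map_tsum hsum
  simp only [ContinuousLinearMap.apply_apply] at hmap
  rw [hmap]
  simp only [ContinuousLinearMap.smul_apply, hpow, smul_smul]
  rw [Summable.tsum_smul_const ?_, Real.exp_eq_exp_ℝ, NormedSpace.exp_eq_tsum ℝ]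
  · simp [smul_eq_mul]
  · have := NormedSpace.expSeries_summable' (𝕂 := ℝ) (lam : ℝ)
    simpa [smul_eq_mul] using this

open SemidirectProduct in
/-- let `C_{w̃}(v,t) = exp(2t(1−ᵗw̃)(1−w̃)) v` be the gradient flow of
`f_{w̃}(v) = ‖w̃ v − v‖²`.  If `v ∈ (V^W)^⊥` has component `v_{θ₀} ≠ 0` in the orthogonal
decomposition `v = Σ_{θ∈Γ_{w̃}} v_θ`, where `θ₀` is the minimal element of `Γ_{w̃}` with
`V^{θ₀}_{w̃} ⊄ V^W`, then `C_{w̃}(v,t)/‖C_{w̃}(v,t)‖ → v_{θ₀}/‖v_{θ₀}‖` as `t → −∞`. -/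
theorem stmt_17 {B W : Type*} [Group W] [Finite W] {M : CoxeterMatrix B}
    (cs : CoxeterSystem M W) (δ : MulAut W)
    (hδ : (δ : W ≃* W) '' (Set.range cs.simple) = Set.range cs.simple)
    {V : Type*} [NormedAddCommGroup V] [InnerProductSpace ℝ V] [FiniteDimensional ℝ V]
    (ρ : Wtilde δ →* (V ≃ₗᵢ[ℝ] V)) (hρ : Function.Injective ρ)
    (hrefl : ∀ i : B, ∃ H : Submodule ℝ V, Module.finrank ℝ H + 1 = Module.finrank ℝ V ∧
      ρ (inl (cs.simple i)) = Submodule.reflection H)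
    -- the element `w̃`
    (x : Wtilde δ)
    -- the minimal angle `θ₀ ∈ Γ_{w̃}` with `V^{θ₀}_{w̃} ⊄ V^W`
    (θ₀ : ℝ)
    (hθ₀ : IsLeast {θ : ℝ | θ ∈ Set.Icc 0 Real.pi ∧ ¬ eigSp ρ x θ ≤ fixedW ρ} θ₀)
    -- `v ∈ (V^W)^⊥`, with its orthogonal decomposition `v = Σ_{θ∈Γ_{w̃}} v_θ`
    (v : V) (hv : v ∈ (fixedW ρ)ᗮ)
    (vθ : ℝ → V) (hvθmem : ∀ θ : ℝ, vθ θ ∈ eigSp ρ x θ)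
    (hvθfin : (Function.support vθ).Finite)
    (hvθrange : ∀ θ : ℝ, θ ∉ Set.Icc 0 Real.pi → vθ θ = 0)
    (hvsum : v = ∑ᶠ θ : ℝ, vθ θ)
    -- the component `v_{θ₀}` is nonzero
    (hne : vθ θ₀ ≠ 0) :
    Filter.Tendsto
      (fun t : ℝ =>
        ‖NormedSpace.exp ((2 * t) •
            ((1 - ContinuousLinearMap.adjoint
                (ρ x).toLinearIsometry.toContinuousLinearMap) *
             (1 - (ρ x).toLinearIsometry.toContinuousLinearMap))) v‖⁻¹ •
          NormedSpace.exp ((2 * t) •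
            ((1 - ContinuousLinearMap.adjoint
                (ρ x).toLinearIsometry.toContinuousLinearMap) *
             (1 - (ρ x).toLinearIsometry.toContinuousLinearMap))) v)
      Filter.atBot (nhds (‖vθ θ₀‖⁻¹ • vθ θ₀)) := by
    classical
  set T : V →L[ℝ] V :=
    (1 - ContinuousLinearMap.adjoint (ρ x).toLinearIsometry.toContinuousLinearMap) *
      (1 - (ρ x).toLinearIsometry.toContinuousLinearMap) with hT
  set lam : ℝ → ℝ := fun θ => 2 - 2 * Real.cos θ with hlam
  have hadj : ContinuousLinearMap.adjoint (ρ x).toLinearIsometry.toContinuousLinearMap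
      = ((ρ x).symm : V →L[ℝ] V) := LinearIsometryEquiv.adjoint_eq_symm (ρ x)
  -- inner product moves across the isometry
  have hinner1 : ∀ a b : V, ⟪ρ x a, b⟫ = ⟪a, (ρ x).symm b⟫ := by
    intro a b
    conv_lhs => rw [← (ρ x).apply_symm_apply b]
    exact (ρ x).inner_map_map a ((ρ x).symm b)
  have hinner2 : ∀ a b : V, ⟪(ρ x).symm a, b⟫ = ⟪a, ρ x b⟫ := by
    intro a b
    conv_lhs => rw [← (ρ x).symm_apply_apply b]
    exact (ρ x).symm.inner_map_map a (ρ x b)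
  -- the eigen-equations
  have hmem : ∀ θ : ℝ, ∀ w ∈ eigSp ρ x θ,
      ρ x w + (ρ x).symm w = (2 * Real.cos θ) • w := by
    intro θ w hw
    have h1 : ρ x w + ρ x⁻¹ w = (2 * Real.cos θ) • w := hw
    rwa [map_inv, LinearIsometryEquiv.coe_inv] at h1
  have hTeig : ∀ θ : ℝ, ∀ w ∈ eigSp ρ x θ, T w = lam θ • w := by
    intro θ w hw
    have hw' := hmem θ w hw
    have hsymm : (ρ x).symm w = (2 * Real.cos θ) • w - ρ x w := by
      rw [← hw']; abel
    have : T w = w - ρ x w - ((ρ x).symm w - w) := by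
      simp only [hT, ContinuousLinearMap.mul_apply, ContinuousLinearMap.sub_apply,
        ContinuousLinearMap.one_apply, hadj]
      have e1 : ((ρ x).toLinearIsometry.toContinuousLinearMap : V → V) = ρ x := rfl
      have e2 : (((ρ x).symm : V →L[ℝ] V) : V → V) = (ρ x).symm := rfl
      rw [e1, e2, map_sub, (ρ x).symm_apply_apply]
    rw [this, hsymm, hlam]
    module
  -- the support
  set s : Finset ℝ := hvθfin.toFinset with hsdef
  have hs : ∀ θ ∈ s, vθ θ ≠ 0 := fun θ h => (Set.Finite.mem_toFinset hvθfin).mp h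
  have hIcc : ∀ θ ∈ s, θ ∈ Set.Icc 0 Real.pi := by
    intro θ hθ
    by_contra h
    exact hs θ hθ (hvθrange θ h)
  have hvs : v = ∑ θ ∈ s, vθ θ := by
    rw [hvsum, finsum_eq_sum vθ hvθfin]
  have hθ₀s : θ₀ ∈ s := (Set.Finite.mem_toFinset hvθfin).mpr hne
  -- orthogonality of components
  have horth : ∀ θ ∈ s, ∀ θ' ∈ s, θ ≠ θ' → ⟪vθ θ, vθ θ'⟫ = 0 := by
    intro θ hθ θ' hθ' hnee
    have ha := hmem θ (vθ θ) (hvθmem θ)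
    have hb := hmem θ' (vθ θ') (hvθmem θ')
    have key : (2 * Real.cos θ) * ⟪vθ θ, vθ θ'⟫ = (2 * Real.cos θ') * ⟪vθ θ, vθ θ'⟫ := by
      calc (2 * Real.cos θ) * ⟪vθ θ, vθ θ'⟫
          = ⟪(2 * Real.cos θ) • vθ θ, vθ θ'⟫ := (real_inner_smul_left _ _ _).symm
        _ = ⟪ρ x (vθ θ) + (ρ x).symm (vθ θ), vθ θ'⟫ := by rw [ha]
        _ = ⟪vθ θ, (ρ x).symm (vθ θ')⟫ + ⟪vθ θ, ρ x (vθ θ')⟫ := by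
            rw [inner_add_left, hinner1, hinner2]
        _ = ⟪vθ θ, ρ x (vθ θ') + (ρ x).symm (vθ θ')⟫ := by rw [inner_add_right]; ring
        _ = (2 * Real.cos θ') * ⟪vθ θ, vθ θ'⟫ := by rw [hb, real_inner_smul_right]
    have hcos : Real.cos θ ≠ Real.cos θ' := fun hc =>
      hnee (Real.injOn_cos (hIcc θ hθ) (hIcc θ' hθ') hc)
    have hz : (Real.cos θ - Real.cos θ') * ⟪vθ θ, vθ θ'⟫ = 0 := by linarith
    rcases mul_eq_zero.mp hz with h | h
    · exact absurd (sub_eq_zero.mp h) hcos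
    · exact h
  -- every component angle is ≥ θ₀
  have hge : ∀ θ ∈ s, θ₀ ≤ θ := by
    intro θ hθ
    apply hθ₀.2
    refine ⟨hIcc θ hθ, fun hle => ?_⟩
    have hfix : vθ θ ∈ fixedW ρ := hle (hvθmem θ)
    have h0 : ⟪vθ θ, v⟫ = 0 := (Submodule.mem_orthogonal _ _).mp hv (vθ θ) hfix
    have hself : ⟪vθ θ, v⟫ = ‖vθ θ‖ ^ 2 := by
      rw [hvs, inner_sum, Finset.sum_eq_single θ]
      · exact real_inner_self_eq_norm_sq _
      · intro θ' hθ' hne'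
        exact horth θ hθ θ' hθ' (Ne.symm hne')
      · intro h; exact absurd hθ h
    rw [hself] at h0
    exact hs θ hθ (norm_eq_zero.mp (pow_eq_zero_iff two_ne_zero |>.mp h0))
  have hθ₀Icc : θ₀ ∈ Set.Icc 0 Real.pi := hθ₀.1.1
  have hgt : ∀ θ ∈ s, θ ≠ θ₀ → lam θ₀ < lam θ := by
    intro θ hθ hne'
    have hlt : θ₀ < θ := lt_of_le_of_ne (hge θ hθ) (Ne.symm hne')
    have := Real.strictAntiOn_cos hθ₀Icc (hIcc θ hθ) hlt
    simp only [hlam]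
    linarith
  -- exponential expansion
  have hexp : ∀ t : ℝ, NormedSpace.exp ((2 * t) • T) v
      = ∑ θ ∈ s, Real.exp (2 * t * lam θ) • vθ θ := by
    intro t
    rw [hvs, map_sum]
    refine Finset.sum_congr rfl fun θ _ => ?_
    refine stmt17_exp_apply_eig _ _ _ ?_
    rw [ContinuousLinearMap.smul_apply, hTeig θ _ (hvθmem θ), smul_smul]
  set g : ℝ → V := fun t => ∑ θ ∈ s, Real.exp (2 * t * (lam θ - lam θ₀)) • vθ θ with hgdef
  have hEg : ∀ t : ℝ, NormedSpace.exp ((2 * t) • T) v = Real.exp (2 * t * lam θ₀) • g t := by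
    intro t
    rw [hexp, hgdef, Finset.smul_sum]
    refine Finset.sum_congr rfl fun θ _ => ?_
    rw [smul_smul, ← Real.exp_add]
    ring_nf
  have hg : Filter.Tendsto g Filter.atBot (nhds (vθ θ₀)) := by
    have hrw : vθ θ₀ = ∑ θ ∈ s, (if θ = θ₀ then vθ θ₀ else 0) := by
      rw [Finset.sum_ite_eq' s θ₀ (fun _ => vθ θ₀), if_pos hθ₀s]
    rw [hrw, hgdef]
    refine tendsto_finset_sum _ fun θ hθ => ?_
    by_cases h : θ = θ₀
    · subst h
      simp only [if_pos rfl, sub_self, mul_zero, Real.exp_zero, one_smul]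
      exact tendsto_const_nhds
    · simp only [if_neg h]
      have hd : (0 : ℝ) < lam θ - lam θ₀ := sub_pos.mpr (hgt θ hθ h)
      have h1 : Filter.Tendsto (fun t : ℝ => Real.exp (2 * (lam θ - lam θ₀) * t))
          Filter.atBot (nhds 0) :=
        Real.tendsto_exp_atBot.comp (Filter.tendsto_id.const_mul_atBot (by positivity))
      have h2 := h1.smul_const (vθ θ)
      rw [zero_smul] at h2
      refine h2.congr fun t => ?_
      rw [show 2 * (lam θ - lam θ₀) * t = 2 * t * (lam θ - lam θ₀) by ring]
  have hgne : vθ θ₀ ≠ 0 := hne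
  have hfin : Filter.Tendsto (fun t => ‖g t‖⁻¹ • g t) Filter.atBot
      (nhds (‖vθ θ₀‖⁻¹ • vθ θ₀)) :=
    ((hg.norm).inv₀ (norm_ne_zero_iff.mpr hgne)).smul hg
  refine hfin.congr fun t => ?_
  rw [hEg t, norm_smul, Real.norm_eq_abs, Real.abs_exp, mul_inv, smul_smul]
  congr 1
  rw [mul_comm, ← mul_assoc, mul_inv_cancel₀ (Real.exp_ne_zero _), one_mul]
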